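/- Let H: ℝ^n ⇉ ℝ^n be defined by gr(H) = {(x,y) ∈ ℝ × ℝ | |x| ≤ 1 and y ≥ 2|x|} (n = 1). Then X(H) = {0} (hence H is reachable), but X(H) is not finitely determined (X_ℓ(H) ≠ X(H) for every ℓ ≥ 1) and R(H) ≠ ℝ. -/
import Mathlib


/-- `ℓ`-fold iterate of a set-valued map: `SIter F ℓ x = F^ℓ(x)`. -/
def SIter {E : Type*} (F : E → Set E) : ℕ → E → Set E
  | 0, x => {x}
  | n + 1, x => ⋃ y ∈ SIter F n x, F y

/-- `X(F)`: initial states of infinite solutions of `x_{k+1} ∈ F(x_k)`. -/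
def XSet {E : Type*} (F : E → Set E) : Set E :=
  {x | ∃ f : ℕ → E, f 0 = x ∧ ∀ k, f (k + 1) ∈ F (f k)}

/-- `R(F) = ⋃_{ℓ ≥ 1} F^ℓ(0)`. -/
def RSet {E : Type*} [Zero E] (F : E → Set E) : Set E :=
  ⋃ ℓ ∈ {ℓ : ℕ | 1 ≤ ℓ}, SIter F ℓ 0

/-- The convex set-valued map with graph `{(x,y) | |x| ≤ 1 and y ≥ 2|x|}`. -/
def Hex : ℝ → Set ℝ := fun x => {y | |x| ≤ 1 ∧ 2 * |x| ≤ y}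

lemma hex_chain (n : ℕ) (x : ℝ) (hx : 0 ≤ x) (h : 2 ^ n * x ≤ 1) :
    (2 : ℝ) ^ n * x ∈ SIter Hex n x := by
  induction n with
  | zero => simp [SIter]
  | succ n ih =>
    have hle : (2:ℝ) ^ n * x ≤ 2 ^ (n+1) * x := by
      apply mul_le_mul_of_nonneg_right _ hx
      exact pow_le_pow_right₀ (by norm_num) (Nat.le_succ n)
    have h' : (2:ℝ) ^ n * x ≤ 1 := hle.trans h
    refine Set.mem_biUnion (ih h') ?_
    have hnn : (0:ℝ) ≤ 2 ^ n * x := by positivity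
    constructor
    · rwa [abs_of_nonneg hnn]
    · rw [abs_of_nonneg hnn]; ring_nf; rfl

lemma hex_iter_nonneg {ℓ : ℕ} (hℓ : 1 ≤ ℓ) {x z : ℝ} (hz : z ∈ SIter Hex ℓ x) :
    0 ≤ z := by
  obtain ⟨n, rfl⟩ := Nat.exists_eq_add_of_le hℓ
  rw [show 1 + n = n + 1 by ring] at hz
  simp only [SIter, Set.mem_iUnion] at hz
  obtain ⟨y, _, hy1, hy2⟩ := hz
  have : (0:ℝ) ≤ 2 * |y| := by positivity
  linarith

/-- For `Hex`: `X(Hex) = {0}` (hence `Hex` is reachable), `X(Hex)` is not finitely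
determined (`X_ℓ(Hex) ≠ X(Hex)` for every `ℓ ≥ 1`), and `R(Hex) ≠ ℝ`. -/
theorem stmt19 :
    XSet Hex = {0} ∧ XSet Hex ⊆ RSet Hex ∧
      (∀ ℓ : ℕ, 1 ≤ ℓ → {x : ℝ | (SIter Hex ℓ x).Nonempty} ≠ XSet Hex) ∧
      RSet Hex ≠ Set.univ := by
  have hX : XSet Hex = {0} := by
    ext x
    simp only [Set.mem_singleton_iff]
    constructor
    · rintro ⟨f, hf0, hf⟩
      have key : ∀ k, 2 ^ k * |x| ≤ |f k| := by
        intro k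
        induction k with
        | zero => simp [hf0]
        | succ k ih =>
          have h1 := (hf k).1
          have h2 := (hf k).2
          have hnn : 0 ≤ f (k+1) := le_trans (by positivity) h2
          rw [abs_of_nonneg hnn]
          calc 2 ^ (k+1) * |x| = 2 * (2 ^ k * |x|) := by ring
            _ ≤ 2 * |f k| := by linarith
            _ ≤ f (k+1) := h2
      by_contra hx
      have hax : 0 < |x| := abs_pos.mpr hx
      obtain ⟨n, hn⟩ := pow_unbounded_of_one_lt (1 / |x|) (by norm_num : (1:ℝ) < 2)
      have : 1 < 2 ^ n * |x| := by
        rw [div_lt_iff₀ hax] at hn; linarith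
      have := (key n).trans (hf n).1
      linarith
    · rintro rfl
      exact ⟨fun _ => 0, rfl, fun k => by simp [Hex]⟩
  refine ⟨hX, ?_, ?_, ?_⟩
  · rw [hX]
    rintro x rfl
    refine Set.mem_biUnion (show 1 ∈ {ℓ : ℕ | 1 ≤ ℓ} from Set.mem_setOf_eq ▸ le_refl 1) ?_
    simpa [SIter, Hex] using Set.mem_biUnion (Set.mem_singleton (0:ℝ))
      (show (0:ℝ) ∈ Hex 0 by simp [Hex])
  · intro ℓ hℓ hcontra
    have hx : ((1:ℝ)/2) ^ ℓ ∈ {x : ℝ | (SIter Hex ℓ x).Nonempty} := by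
      refine ⟨2 ^ ℓ * (1/2) ^ ℓ, hex_chain ℓ _ (by positivity) ?_⟩
      rw [← mul_pow]; norm_num
    rw [hcontra, hX] at hx
    have : ((1:ℝ)/2) ^ ℓ ≠ 0 := by positivity
    exact this hx
  · intro h
    have : (-1 : ℝ) ∈ RSet Hex := h ▸ Set.mem_univ _
    simp only [RSet, Set.mem_iUnion] at this
    obtain ⟨ℓ, hℓ, hm⟩ := this
    have := hex_iter_nonneg hℓ hm
    linarith
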